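/- Let p : 𝕊 → ℂ be holomorphic on 𝕊 = {w : 0 < Re w < 1} with Re p(w) ≥ 0 on 𝕊. Then the limits A := lim_{v→+∞} e^{−πv} p(1/2 + iv) and B := lim_{v→−∞} e^{πv} p(1/2 + iv) exist, are finite, and are nonnegative real numbers. -/

import Mathlib

open Complex Set Filter Metric Topology

noncomputable section

namespace StripAux

def S : Set ℂ := {w : ℂ | 0 < w.re ∧ w.re < 1}

lemma isOpen_S : IsOpen S :=
  (isOpen_Ioo : IsOpen (Ioo (0:ℝ) 1)).preimage Complex.continuous_re

lemma wv_mem (v : ℝ) : (1/2 : ℂ) + v * I ∈ S := by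
  constructor <;> simp [S] <;> norm_num

/-- Schwarz–Pick inequality on the center line of the strip, strict positivity version. -/
lemma pick_strict (f : ℂ → ℂ) (hf : DifferentiableOn ℂ f S)
    (hRe : ∀ w ∈ S, 0 < (f w).re) (v : ℝ) :
    ‖deriv f ((1/2 : ℂ) + v * I)‖ ≤ Real.pi * (f ((1/2 : ℂ) + v * I)).re := by
  set w₀ : ℂ := (1/2 : ℂ) + v * I with hw₀def
  have hw₀ : w₀ ∈ S := wv_mem v
  set y : ℝ := Real.exp (-(Real.pi * v)) with hydef
  have hy : 0 < y := Real.exp_pos _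
  set b : ℂ := f w₀ with hbdef
  have hbre : 0 < b.re := hRe _ hw₀
  -- the map from the disk to the strip
  set z : ℂ → ℂ := fun ζ => (y : ℂ) * I * ((1 + ζ) / (1 - ζ)) with hzdef
  set g : ℂ → ℂ := fun ζ => Complex.log (z ζ) / ((Real.pi : ℂ) * I) with hgdef
  have hπI : ((Real.pi : ℂ) * I) ≠ 0 := by
    simp [Complex.ext_iff, Real.pi_ne_zero]
  have hsub : ∀ ζ : ℂ, ζ ∈ ball (0:ℂ) 1 → (1 : ℂ) - ζ ≠ 0 := by
    intro ζ hζ h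
    have : ζ = 1 := by linear_combination -h
    simp [this] at hζ
  have hzim : ∀ ζ ∈ ball (0:ℂ) 1, 0 < (z ζ).im := by
    intro ζ hζ
    have h1 : Complex.normSq (1 - ζ) ≠ 0 := by
      simpa [Complex.normSq_eq_zero] using hsub ζ hζ
    have h2 : ζ.re ^ 2 + ζ.im ^ 2 < 1 := by
      have := mem_ball_zero_iff.1 hζ
      have h3 : ‖ζ‖ < 1 := by simpa using this
      have := Complex.sq_norm ζ
      nlinarith [Complex.normSq_apply ζ, norm_nonneg ζ]
    have hre : 0 < ((1 + ζ) / (1 - ζ)).re := by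
      rw [Complex.div_re]
      have hpos : 0 < Complex.normSq (1 - ζ) := lt_of_le_of_ne (Complex.normSq_nonneg _) (Ne.symm h1)
      rw [← add_div, lt_div_iff₀ hpos]
      simp [Complex.normSq_apply]
      nlinarith
    have : (z ζ).im = y * ((1 + ζ) / (1 - ζ)).re := by
      simp [hzdef, Complex.mul_im]
    rw [this]
    positivity
  have hz_slit : ∀ ζ ∈ ball (0:ℂ) 1, z ζ ∈ Complex.slitPlane := by
    intro ζ hζ
    exact Complex.mem_slitPlane_iff.2 (Or.inr (ne_of_gt (hzim ζ hζ)))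
  -- g maps the disk into the strip
  have hgre : ∀ ζ ∈ ball (0:ℂ) 1, (g ζ).re = Complex.arg (z ζ) / Real.pi := by
    intro ζ hζ
    rw [hgdef]
    simp only [Complex.div_re, Complex.mul_re, Complex.mul_im, Complex.ofReal_re,
      Complex.ofReal_im, Complex.I_re, Complex.I_im]
    rw [Complex.log_im]
    have : Complex.normSq ((Real.pi : ℂ) * I) = Real.pi ^ 2 := by
      simp [Complex.normSq_apply]; ring
    rw [this]
    field_simp
    ring
  have hgS : ∀ ζ ∈ ball (0:ℂ) 1, g ζ ∈ S := by
    intro ζ hζ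
    have him := hzim ζ hζ
    have harg_pos : 0 < Complex.arg (z ζ) := by
      rcases lt_or_eq_of_le (Complex.arg_nonneg_iff.2 him.le) with h | h
      · exact h
      · exact absurd (Complex.arg_eq_zero_iff.1 h.symm).2 (ne_of_gt him)
    have harg_lt : Complex.arg (z ζ) < Real.pi := by
      rcases lt_or_eq_of_le (Complex.arg_le_pi (z ζ)) with h | h
      · exact h
      · exact absurd (Complex.arg_eq_pi_iff.1 h).2 (ne_of_gt him)
    constructor
    · rw [hgre ζ hζ]; positivity
    · rw [hgre ζ hζ]
      rw [div_lt_one Real.pi_pos]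
      exact harg_lt
  -- g is differentiable on the disk
  have hzdiff : ∀ ζ ∈ ball (0:ℂ) 1, HasDerivAt z ((y:ℂ) * I * (2 / (1 - ζ)^2)) ζ := by
    intro ζ hζ
    have h1 : HasDerivAt (fun ζ : ℂ => (1 + ζ) / (1 - ζ))
        ((1 * (1 - ζ) - (1 + ζ) * (-1)) / (1 - ζ)^2) ζ := by
      exact HasDerivAt.div ((hasDerivAt_id ζ).const_add 1)
        (((hasDerivAt_id ζ).neg).const_add 1) (hsub ζ hζ)
    have h2 := h1.const_mul ((y:ℂ) * I)
    refine h2.congr_deriv ?_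
    ring
  have hgdiff : ∀ ζ ∈ ball (0:ℂ) 1,
      HasDerivAt g ((y:ℂ) * I * (2 / (1 - ζ)^2) / z ζ / ((Real.pi : ℂ) * I)) ζ := by
    intro ζ hζ
    exact ((hzdiff ζ hζ).clog (hz_slit ζ hζ)).div_const _
  -- value of g at 0
  have hg0 : g 0 = w₀ := by
    have hexp : Complex.exp ((Real.pi : ℂ) * I * w₀) = (y : ℂ) * I := by
      have : (Real.pi : ℂ) * I * w₀ = (-(Real.pi * v) : ℝ) + (Real.pi / 2 : ℝ) * I := by
        push_cast
        rw [hw₀def]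
        ring_nf
        simp [Complex.I_sq]
        ring
      rw [this, Complex.exp_add, Complex.exp_mul_I]
      push_cast
      rw [Complex.cos_pi_div_two, Complex.sin_pi_div_two]
      rw [hydef]
      rw [show ((Real.exp (-(Real.pi * v)) : ℝ) : ℂ) = Complex.exp (-(Real.pi * v) : ℝ) from Complex.ofReal_exp _]
      push_cast
      ring
    have him : ((Real.pi : ℂ) * I * w₀).im = Real.pi / 2 := by
      rw [hw₀def]
      simp [Complex.mul_im, Complex.add_im, Complex.mul_re]
      ring
    have hlog : Complex.log ((y:ℂ) * I) = (Real.pi : ℂ) * I * w₀ := by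
      rw [← hexp, Complex.log_exp]
      · rw [him]; linarith [Real.pi_pos]
      · rw [him]; linarith [Real.pi_pos]
    have hz0 : z 0 = (y : ℂ) * I := by simp [hzdef]
    rw [hgdef]
    simp only [hz0, hlog]
    exact mul_div_cancel_left₀ w₀ hπI
  have hyI : (y:ℂ) * I ≠ 0 := by
    simp [Complex.ext_iff, ne_of_gt hy]
  have hg0' : HasDerivAt g (2 / ((Real.pi : ℂ) * I)) 0 := by
    have := hgdiff 0 (by simp)
    convert this using 1
    have hz0 : z 0 = (y : ℂ) * I := by simp [hzdef]
    rw [hz0]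
    field_simp
    simp [hy.ne']
  -- the map Φ from the strip to the unit disk
  set Φ : ℂ → ℂ := fun w => (f w - b) / (f w + (starRingEnd ℂ) b) with hΦdef
  have hdenom : ∀ w ∈ S, f w + (starRingEnd ℂ) b ≠ 0 := by
    intro w hw h
    have : (f w + (starRingEnd ℂ) b).re = (f w).re + b.re := by
      simp [Complex.add_re, Complex.conj_re]
    rw [h] at this
    simp at this
    nlinarith [hRe w hw]
  have hΦball : MapsTo Φ S (ball (0:ℂ) 1) := by
    intro w hw
    have ha := hRe w hw
    set a : ℂ := f w
    have hlt : Complex.normSq (a - b) < Complex.normSq (a + (starRingEnd ℂ) b) := by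
      simp only [Complex.normSq_apply, Complex.sub_re, Complex.sub_im, Complex.add_re,
        Complex.add_im, Complex.conj_re, Complex.conj_im]
      nlinarith
    have habs : ‖a - b‖ < ‖a + (starRingEnd ℂ) b‖ := by
      have := Real.sqrt_lt_sqrt (Complex.normSq_nonneg _) hlt
      simpa [Complex.norm_def] using this
    rw [mem_ball_zero_iff]
    rw [hΦdef]
    simp only [norm_div]
    rw [div_lt_one (lt_of_le_of_lt (norm_nonneg _) habs)]
    exact habs
  have hΦdiff : DifferentiableOn ℂ Φ S := by
    apply DifferentiableOn.div
    · exact hf.sub (differentiableOn_const _)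
    · exact hf.add (differentiableOn_const _)
    · exact hdenom
  -- h = Φ ∘ g
  set h : ℂ → ℂ := fun ζ => Φ (g ζ) with hhdef
  have hhdiff : DifferentiableOn ℂ h (ball (0:ℂ) 1) := by
    apply hΦdiff.comp
    · intro ζ hζ
      exact ((hgdiff ζ hζ).differentiableAt).differentiableWithinAt
    · exact hgS
  have hΦw₀ : Φ w₀ = 0 := by simp [hΦdef, ← hbdef]
  have hh0 : h 0 = 0 := by rw [hhdef]; simp only [hg0, hΦw₀]
  have hmaps : MapsTo h (ball (0:ℂ) 1) (ball (h 0) 1) := by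
    rw [hh0]
    intro ζ hζ
    exact hΦball (hgS ζ hζ)
  have hschwarz : ‖deriv h 0‖ ≤ 1 / 1 :=
    Complex.norm_deriv_le_div_of_mapsTo_ball hhdiff (hmaps.mono_right ball_subset_closedBall) one_pos
  -- compute deriv h 0
  have hfd : HasDerivAt f (deriv f w₀) w₀ :=
    (hf.differentiableAt (isOpen_S.mem_nhds hw₀)).hasDerivAt
  have hb2 : b + (starRingEnd ℂ) b = ((2 * b.re : ℝ) : ℂ) := by
    rw [Complex.add_conj]
  have hΦd : HasDerivAt Φ (deriv f w₀ / ((2 * b.re : ℝ) : ℂ)) w₀ := by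
    have h1 : HasDerivAt (fun w => f w - b) (deriv f w₀) w₀ := hfd.sub_const b
    have h2 : HasDerivAt (fun w => f w + (starRingEnd ℂ) b) (deriv f w₀) w₀ :=
      hfd.add_const _
    have h3 := h1.div h2 (hdenom w₀ hw₀)
    refine h3.congr_deriv ?_
    symm
    rw [← hbdef, hb2, sub_self, zero_mul, sub_zero, sq]
    push_cast
    have hbc : (2 * (b.re : ℂ)) ≠ 0 := by
      simp only [ne_eq, mul_eq_zero, Complex.ofReal_eq_zero, not_or]
      constructor
      · norm_num
      · nlinarith
    rw [div_eq_div_iff hbc (mul_ne_zero hbc hbc)]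
    ring
  have hhd : HasDerivAt h (deriv f w₀ / ((2 * b.re : ℝ) : ℂ) * (2 / ((Real.pi : ℂ) * I))) 0 := by
    have hΦd' : HasDerivAt Φ (deriv f w₀ / ((2 * b.re : ℝ) : ℂ)) (g 0) := by
      rw [hg0]; exact hΦd
    have := HasDerivAt.comp 0 hΦd' hg0'
    exact this
  have hderiv_eq : deriv h 0 = deriv f w₀ / ((2 * b.re : ℝ) : ℂ) * (2 / ((Real.pi : ℂ) * I)) :=
    hhd.deriv
  rw [hderiv_eq] at hschwarz
  have hπ := Real.pi_pos
  have e1 : ‖((2 * b.re : ℝ) : ℂ)‖ = 2 * b.re := by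
    rw [Complex.norm_real, Real.norm_eq_abs]
    exact abs_of_pos (by linarith)
  have e2 : ‖(Real.pi : ℂ) * I‖ = Real.pi := by
    rw [norm_mul, Complex.norm_real, Complex.norm_I, Real.norm_eq_abs, abs_of_pos hπ, mul_one]
  have e3 : ‖(2:ℂ)‖ = 2 := by norm_num
  rw [norm_mul, norm_div, norm_div, e1, e2, e3, div_one] at hschwarz
  rw [div_mul_div_comm, div_le_one (by positivity)] at hschwarz
  nlinarith [norm_nonneg (deriv f w₀)]



/-- Schwarz–Pick inequality, nonnegative real part version. -/
lemma pick (f : ℂ → ℂ) (hf : DifferentiableOn ℂ f S)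
    (hRe : ∀ w ∈ S, 0 ≤ (f w).re) (v : ℝ) :
    ‖deriv f ((1/2 : ℂ) + v * I)‖ ≤ Real.pi * (f ((1/2 : ℂ) + v * I)).re := by
  have key : ∀ ε > (0:ℝ), ‖deriv f ((1/2 : ℂ) + v * I)‖
      ≤ Real.pi * (f ((1/2 : ℂ) + v * I)).re + Real.pi * ε := by
    intro ε hε
    have hf' : DifferentiableOn ℂ (fun w => f w + (ε : ℂ)) S :=
      hf.add_const _
    have hRe' : ∀ w ∈ S, 0 < ((fun w => f w + (ε : ℂ)) w).re := by
      intro w hw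
      simp only [Complex.add_re, Complex.ofReal_re]
      linarith [hRe w hw]
    have := pick_strict _ hf' hRe' v
    have hd : deriv (fun w => f w + (ε : ℂ)) ((1/2 : ℂ) + v * I) = deriv f ((1/2 : ℂ) + v * I) := by
      rw [deriv_add_const]
    rw [hd] at this
    simp only [Complex.add_re, Complex.ofReal_re] at this
    linarith
  by_contra hcon
  push_neg at hcon
  set d := ‖deriv f ((1/2 : ℂ) + v * I)‖
  set r := Real.pi * (f ((1/2 : ℂ) + v * I)).re
  have hπ := Real.pi_pos
  have : d ≤ r + Real.pi * ((d - r) / (2 * Real.pi)) := key _ (div_pos (by linarith) (by positivity))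
  have h2 : Real.pi * ((d - r) / (2 * Real.pi)) = (d - r)/2 := by field_simp
  rw [h2] at this
  linarith

set_option maxHeartbeats 2000000 in
/-- Existence of the limit at the top end of the strip. -/
lemma end_limit (p : ℂ → ℂ) (hp : DifferentiableOn ℂ p S)
    (hRe : ∀ w ∈ S, 0 ≤ (p w).re) :
    ∃ A : ℝ, 0 ≤ A ∧ Tendsto (fun v : ℝ =>
      (Real.exp (-Real.pi * v) : ℂ) * p ((1/2 : ℂ) + (v:ℂ) * I)) atTop (𝓝 (A : ℂ)) := by
  have hπ := Real.pi_pos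
  have hexpcont : Continuous (fun s : ℝ => Real.exp (Real.pi * s)) :=
    (continuous_const.mul continuous_id).rexp
  set w : ℝ → ℂ := fun v => (1/2 : ℂ) + (v:ℂ) * I with hwdef
  have hwS : ∀ v, w v ∈ S := wv_mem
  have hwcont : Continuous w := by
    exact continuous_const.add (Complex.continuous_ofReal.mul continuous_const)
  set d : ℝ → ℂ := fun v => deriv p (w v) with hddef
  have hdcont : Continuous d := by
    have h1 : AnalyticOnNhd ℂ p S := hp.analyticOnNhd isOpen_S
    exact (h1.deriv.continuousOn).comp_continuous hwcont hwS
  have hwD : ∀ v : ℝ, HasDerivAt w I v := by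
    intro v
    have h1 : HasDerivAt (fun v : ℝ => (v : ℂ)) 1 v := by
      have := (hasDerivAt_id v).ofReal_comp
      rw [Complex.ofReal_one] at this
      exact this
    have h2 : HasDerivAt (fun t : ℝ => (1/2 : ℂ) + (t:ℂ) * I) (1 * I) v :=
      (h1.mul_const I).const_add (1/2 : ℂ)
    rw [one_mul] at h2
    exact h2
  have hP : ∀ v : ℝ, HasDerivAt (fun t => p (w t)) (d v * I) v := by
    intro v
    have hp' : HasDerivAt p (d v) (w v) :=
      (hp.differentiableAt (isOpen_S.mem_nhds (hwS v))).hasDerivAt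
    exact HasDerivAt.comp v hp' (hwD v)
  set u : ℝ → ℝ := fun v => (p (w v)).re with hudef
  set m : ℝ → ℝ := fun v => (p (w v)).im with hmdef
  have hucont : Continuous u := Complex.continuous_re.comp (hp.continuousOn.comp_continuous hwcont hwS)
  have hu : ∀ v, HasDerivAt u (-(d v).im) v := by
    intro v
    have := Complex.reCLM.hasFDerivAt.comp_hasDerivAt v (hP v)
    refine this.congr_deriv ?_
    simp [Complex.mul_I_re]
  have hm : ∀ v, HasDerivAt m ((d v).re) v := by
    intro v
    have := Complex.imCLM.hasFDerivAt.comp_hasDerivAt v (hP v)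
    refine this.congr_deriv ?_
    simp [Complex.mul_I_im]
  have hupos : ∀ v, 0 ≤ u v := fun v => hRe _ (hwS v)
  have hpick : ∀ v, ‖d v‖ ≤ Real.pi * u v := fun v => pick p hp hRe v
  have him_le : ∀ v, |(d v).im| ≤ Real.pi * u v := by
    intro v
    exact le_trans (Complex.abs_im_le_norm (d v)) (hpick v)
  set E : ℝ → ℝ := fun v => Real.exp (-Real.pi * v) with hEdef
  have hEpos : ∀ v, 0 < E v := fun v => Real.exp_pos _
  have hED : ∀ v : ℝ, HasDerivAt E (-Real.pi * E v) v := by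
    intro v
    have h1 : HasDerivAt (fun v : ℝ => -Real.pi * v) (-Real.pi) v := by
      simpa using (hasDerivAt_id v).const_mul (-Real.pi)
    have h2 : HasDerivAt (fun t : ℝ => Real.exp (-Real.pi * t))
        (Real.exp (-Real.pi * v) * (-Real.pi)) v :=
      (Real.hasDerivAt_exp (-Real.pi * v)).comp v h1
    convert h2 using 1
    simp [hEdef]
    ring
  set φ : ℝ → ℝ := fun v => E v * u v with hφdef
  set h : ℝ → ℝ := fun v => E v * (Real.pi * u v + (d v).im) with hhdef
  have hh0 : ∀ v, 0 ≤ h v := by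
    intro v
    have h1 : 0 ≤ Real.pi * u v + (d v).im := by linarith [(abs_le.1 (him_le v)).1]
    exact mul_nonneg (hEpos v).le h1
  have hφD : ∀ v, HasDerivAt φ (-(h v)) v := by
    intro v
    have := (hED v).mul (hu v)
    refine this.congr_deriv ?_
    simp only [hhdef]
    ring
  have hφpos : ∀ v, 0 ≤ φ v := fun v => mul_nonneg (hEpos v).le (hupos v)
  have hanti : Antitone φ := by
    apply antitone_of_deriv_nonpos
    · exact fun v => (hφD v).differentiableAt
    · intro v
      rw [(hφD v).deriv]
      exact neg_nonpos.2 (hh0 v)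
  set A : ℝ := ⨅ v, φ v with hAdef
  have hbdd : BddBelow (range φ) := ⟨0, by rintro x ⟨v, rfl⟩; exact hφpos v⟩
  have hA : Tendsto φ atTop (𝓝 A) := tendsto_atTop_ciInf hanti hbdd
  have hA0 : 0 ≤ A := le_ciInf hφpos
  have hφgeA : ∀ v, A ≤ φ v := fun v => ciInf_le hbdd v
  have hhcont : Continuous h := by
    apply Continuous.mul (Real.continuous_exp.comp (continuous_const.mul continuous_id))
    exact (continuous_const.mul hucont).add (Complex.continuous_im.comp hdcont)
  -- FTC facts
  have hφint : ∀ V v : ℝ, (∫ s in V..v, h s) = φ V - φ v := by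
    intro V v
    have := intervalIntegral.integral_eq_sub_of_hasDerivAt
      (f := φ) (f' := fun s => -(h s)) (a := V) (b := v)
      (fun s _ => hφD s) ((hhcont.neg).intervalIntegrable V v)
    rw [intervalIntegral.integral_neg] at this
    linarith [this]
  have hmint : ∀ V v : ℝ, m v - m V = ∫ s in V..v, (d s).re := by
    intro V v
    exact (intervalIntegral.integral_eq_sub_of_hasDerivAt
      (fun s _ => hm s) (((Complex.continuous_re.comp hdcont)).intervalIntegrable V v)).symm
  have hexpint : ∀ V v : ℝ, (∫ s in V..v, Real.exp (Real.pi * s))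
      = Real.exp (Real.pi * v) / Real.pi - Real.exp (Real.pi * V) / Real.pi := by
    intro V v
    apply intervalIntegral.integral_eq_sub_of_hasDerivAt
    · intro s _
      have h1 : HasDerivAt (fun s : ℝ => Real.pi * s) Real.pi s := by
        simpa using (hasDerivAt_id s).const_mul Real.pi
      have h2 := ((Real.hasDerivAt_exp (Real.pi * s)).comp s h1).div_const Real.pi
      refine h2.congr_deriv ?_
      field_simp
    · exact hexpcont.intervalIntegrable V v
  -- pointwise bound
  set C1 : ℝ := Real.sqrt (2 * Real.pi * φ 0) with hC1def
  have hC1 : 0 ≤ C1 := Real.sqrt_nonneg _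
  have hptwise : ∀ s : ℝ, 0 ≤ s →
      |(d s).re| ≤ Real.exp (Real.pi * s) * C1 * Real.sqrt (h s) := by
    intro s hs
    have h1 : (d s).re ^ 2 ≤ (Real.exp (Real.pi * s))^2 * (2 * Real.pi * φ 0) * h s := by
      set e := Real.exp (Real.pi * s) with hedef
      have he : 0 < e := Real.exp_pos _
      have hee : e * Real.exp (-Real.pi * s) = 1 := by
        rw [hedef, ← Real.exp_add]; simp
      have k1 : e * h s = Real.pi * u s + (d s).im := by
        have hhs : h s = Real.exp (-Real.pi * s) * (Real.pi * u s + (d s).im) := rfl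
        rw [hhs, ← mul_assoc, hee, one_mul]
      have k2 : (d s).re^2 + (d s).im^2 ≤ (Real.pi * u s)^2 := by
        have hn := hpick s
        have hsq : ‖d s‖^2 = (d s).re^2 + (d s).im^2 := by
          rw [Complex.sq_norm, Complex.normSq_apply]; ring
        nlinarith [norm_nonneg (d s)]
      have k3 : u s ≤ e * φ 0 := by
        have hφs : φ s = Real.exp (-Real.pi * s) * u s := rfl
        have h4 : u s = e * φ s := by rw [hφs, ← mul_assoc, hee, one_mul]
        have h5 : φ s ≤ φ 0 := hanti hs
        nlinarith
      have k4 := abs_le.1 (him_le s)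
      have s1 : (d s).re^2 ≤ (Real.pi*u s + (d s).im) * (Real.pi*u s - (d s).im) := by nlinarith
      have s2 : (Real.pi*u s + (d s).im) * (Real.pi*u s - (d s).im)
          ≤ (Real.pi*u s + (d s).im) * (2*Real.pi*u s) := by
        apply mul_le_mul_of_nonneg_left (by linarith [k4.1]) (by linarith [k4.1])
      have s3 : (Real.pi*u s + (d s).im) * (2*Real.pi*u s) = (e * h s) * (2*Real.pi*u s) := by
        rw [k1]
      have s4 : (e * h s) * (2*Real.pi*u s) ≤ (e * h s) * (2*Real.pi*(e*φ 0)) := by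
        apply mul_le_mul_of_nonneg_left (by nlinarith) (mul_nonneg he.le (hh0 s))
      calc (d s).re^2 ≤ (e * h s) * (2*Real.pi*(e*φ 0)) := by linarith
        _ = e^2 * (2 * Real.pi * φ 0) * h s := by ring
    calc |(d s).re| = Real.sqrt ((d s).re ^ 2) := (Real.sqrt_sq_eq_abs _).symm
      _ ≤ Real.sqrt ((Real.exp (Real.pi * s))^2 * (2 * Real.pi * φ 0) * h s) :=
          Real.sqrt_le_sqrt h1
      _ = Real.exp (Real.pi * s) * C1 * Real.sqrt (h s) := by
          have hc : (0:ℝ) ≤ 2 * Real.pi * φ 0 := by nlinarith [hφpos 0, Real.pi_pos]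
          rw [Real.sqrt_mul (mul_nonneg (sq_nonneg _) hc), Real.sqrt_mul (sq_nonneg _),
            Real.sqrt_sq (Real.exp_pos _).le]
  -- the imaginary part tends to zero
  set q : ℝ → ℝ := fun v => E v * m v with hqdef
  have hE0 : Tendsto E atTop (𝓝 0) := by
    have h1 : Tendsto (fun v : ℝ => Real.pi * v) atTop atTop :=
      tendsto_id.const_mul_atTop hπ
    have h2 : Tendsto (fun v : ℝ => -(Real.pi * v)) atTop atBot :=
      tendsto_neg_atTop_atBot.comp h1
    have h3 := Real.tendsto_exp_atBot.comp h2
    have : E = fun v : ℝ => Real.exp (-(Real.pi * v)) := by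
      funext v; rw [hEdef]; ring_nf
    rw [this]
    exact h3
  have hq : Tendsto q atTop (𝓝 0) := by
    rw [Metric.tendsto_atTop]
    intro ε' hε'
    set K : ℝ := C1 * (1/Real.pi + 1) + 1 with hKdef
    have hK0 : 0 < K := by positivity
    set ε : ℝ := ε' / (2 * K) with hεdef
    have hε0 : 0 < ε := by positivity
    obtain ⟨N, hN⟩ := Metric.tendsto_atTop.1 hA (ε^2) (by positivity)
    set V : ℝ := max N 0 with hVdef
    have hV0 : (0:ℝ) ≤ V := le_max_right _ _
    have hφV : φ V - A < ε^2 := by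
      have h5 := hN V (le_max_left _ _)
      rw [Real.dist_eq] at h5
      linarith [(abs_lt.1 h5).2]
    have hmain : ∀ v, V ≤ v → |q v| ≤ E v * |m V| + K * ε := by
      intro v hv
      have hEv := hEpos v
      have hev := Real.exp_pos (Real.pi * v)
      have e1 : |q v| ≤ E v * (|m V| + |∫ s in V..v, (d s).re|) := by
        have h6 : m v = m V + ∫ s in V..v, (d s).re := by linarith [hmint V v]
        have hqv : q v = E v * m v := rfl
        rw [hqv, h6, abs_mul, abs_of_pos hEv]
        exact mul_le_mul_of_nonneg_left (abs_add_le _ _) hEv.le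
      have e2 : |∫ s in V..v, (d s).re| ≤ ∫ s in V..v, |(d s).re| := by
        have h7 := intervalIntegral.norm_integral_le_integral_norm
          (f := fun s => (d s).re) (μ := MeasureTheory.volume) (a := V) (b := v) hv
        simpa [Real.norm_eq_abs] using h7
      have hGcont : Continuous (fun s : ℝ =>
          (C1/2*ε) * Real.exp (Real.pi*s) + (C1/(2*ε)*Real.exp (Real.pi*v)) * h s) := by
        exact ((continuous_const.mul hexpcont).add (continuous_const.mul hhcont))
      have e3 : (∫ s in V..v, |(d s).re|)
          ≤ ∫ s in V..v, ((C1/2*ε) * Real.exp (Real.pi*s)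
              + (C1/(2*ε)*Real.exp (Real.pi*v)) * h s) := by
        apply intervalIntegral.integral_mono_on hv
        · exact ((Complex.continuous_re.comp hdcont).abs).intervalIntegrable V v
        · exact hGcont.intervalIntegrable V v
        · intro s hs
          have hs0 : 0 ≤ s := le_trans hV0 hs.1
          have hsv : s ≤ v := hs.2
          have b1 := hptwise s hs0
          have hes := Real.exp_pos (Real.pi * s)
          have b2 : Real.sqrt (h s) ≤ (ε + h s / ε)/2 := by
            have h8 := Real.sq_sqrt (hh0 s)
            have h9 := Real.sqrt_nonneg (h s)
            rw [le_div_iff₀ (by norm_num : (0:ℝ) < 2), ← sub_nonneg]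
            have h10 := sq_nonneg (Real.sqrt (h s) - ε)
            have h12 : 0 ≤ (ε + h s/ε - Real.sqrt (h s)*2) * ε := by
              have h13 : (ε + h s/ε - Real.sqrt (h s)*2) * ε
                  = ε^2 + h s - 2*ε*Real.sqrt (h s) := by field_simp
              rw [h13]; nlinarith
            nlinarith
          have b3 : Real.exp (Real.pi * s) ≤ Real.exp (Real.pi * v) :=
            Real.exp_le_exp.2 (by nlinarith)
          calc |(d s).re| ≤ Real.exp (Real.pi*s) * C1 * Real.sqrt (h s) := b1
            _ ≤ Real.exp (Real.pi*s) * C1 * ((ε + h s/ε)/2) :=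
                mul_le_mul_of_nonneg_left b2 (by positivity)
            _ = (C1/2*ε) * Real.exp (Real.pi*s)
                + (C1/(2*ε)*Real.exp (Real.pi*s)) * h s := by field_simp
            _ ≤ (C1/2*ε) * Real.exp (Real.pi*s)
                + (C1/(2*ε)*Real.exp (Real.pi*v)) * h s := by
                have h12 : (C1/(2*ε)) * Real.exp (Real.pi*s) * h s
                    ≤ (C1/(2*ε)) * Real.exp (Real.pi*v) * h s := by
                  apply mul_le_mul_of_nonneg_right _ (hh0 s)
                  exact mul_le_mul_of_nonneg_left b3 (by positivity)
                linarith
      have e4 : (∫ s in V..v, ((C1/2*ε) * Real.exp (Real.pi*s)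
              + (C1/(2*ε)*Real.exp (Real.pi*v)) * h s))
          = (C1/2*ε) * (Real.exp (Real.pi*v)/Real.pi - Real.exp (Real.pi*V)/Real.pi)
            + (C1/(2*ε)*Real.exp (Real.pi*v)) * (φ V - φ v) := by
        rw [intervalIntegral.integral_add (f := fun s => (C1/2*ε) * Real.exp (Real.pi*s))
            (g := fun s => (C1/(2*ε)*Real.exp (Real.pi*v)) * h s)
            ((continuous_const.mul hexpcont).intervalIntegrable V v)
            ((continuous_const.mul hhcont).intervalIntegrable V v),
          intervalIntegral.integral_const_mul, intervalIntegral.integral_const_mul,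
          hexpint, hφint]
      have e5 : (C1/2*ε) * (Real.exp (Real.pi*v)/Real.pi - Real.exp (Real.pi*V)/Real.pi)
            + (C1/(2*ε)*Real.exp (Real.pi*v)) * (φ V - φ v)
          ≤ Real.exp (Real.pi*v) * (K * ε) := by
        have heV := Real.exp_pos (Real.pi * V)
        have t1 : (C1/2*ε) * (Real.exp (Real.pi*v)/Real.pi - Real.exp (Real.pi*V)/Real.pi)
            ≤ (C1/2*ε) * (Real.exp (Real.pi*v)/Real.pi) := by
          apply mul_le_mul_of_nonneg_left _ (by positivity)
          have : 0 < Real.exp (Real.pi*V)/Real.pi := by positivity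
          linarith
        have t2 : (C1/(2*ε)*Real.exp (Real.pi*v)) * (φ V - φ v)
            ≤ (C1/(2*ε)*Real.exp (Real.pi*v)) * ε^2 := by
          apply mul_le_mul_of_nonneg_left _ (by positivity)
          linarith [hφgeA v]
        have t3 : (C1/(2*ε)*Real.exp (Real.pi*v)) * ε^2
            = Real.exp (Real.pi*v) * (C1/2 * ε) := by field_simp
        have t4 : (C1/2*ε) * (Real.exp (Real.pi*v)/Real.pi)
            = Real.exp (Real.pi*v) * (C1/(2*Real.pi) * ε) := by field_simp
        have t5 : C1/(2*Real.pi) * ε + C1/2 * ε ≤ K * ε := by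
          have hexp2 : C1 * (1/Real.pi + 1) = C1/Real.pi + C1 := by field_simp
          have hq1 : C1/(2*Real.pi) ≤ C1/Real.pi := by
            rw [div_le_div_iff₀ (by positivity) hπ]
            nlinarith
          have hq2 : C1/(2*Real.pi) + C1/2 ≤ K := by
            rw [hKdef, hexp2]; linarith
          nlinarith
        nlinarith [t1, t2, t3, t4, t5, hev]
      have e6 : E v * Real.exp (Real.pi * v) = 1 := by
        rw [hEdef, ← Real.exp_add]; simp
      calc |q v| ≤ E v * (|m V| + |∫ s in V..v, (d s).re|) := e1
        _ ≤ E v * (|m V| + Real.exp (Real.pi*v) * (K * ε)) := by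
            apply mul_le_mul_of_nonneg_left _ hEv.le
            have h13 : |∫ s in V..v, (d s).re| ≤ Real.exp (Real.pi*v) * (K*ε) := by
              calc |∫ s in V..v, (d s).re| ≤ ∫ s in V..v, |(d s).re| := e2
                _ ≤ _ := e3
                _ = _ := e4
                _ ≤ _ := e5
            linarith
        _ = E v * |m V| + (E v * Real.exp (Real.pi*v)) * (K * ε) := by ring
        _ = E v * |m V| + K * ε := by rw [e6]; ring
    have hmV : Tendsto (fun v => E v * |m V|) atTop (𝓝 0) := by
      have h15 := hE0.mul_const |m V|
      rw [zero_mul] at h15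
      exact h15
    obtain ⟨N₂, hN₂⟩ := Metric.tendsto_atTop.1 hmV (ε'/4) (by positivity)
    refine ⟨max V N₂, fun v hv => ?_⟩
    have hv1 : V ≤ v := le_trans (le_max_left _ _) hv
    have hv2 : N₂ ≤ v := le_trans (le_max_right _ _) hv
    have hb1 := hmain v hv1
    have hb2 := hN₂ v hv2
    rw [Real.dist_eq, sub_zero] at hb2 ⊢
    have hb3 : E v * |m V| < ε'/4 :=
      lt_of_le_of_lt (le_abs_self _) hb2
    have hb4 : K * ε = ε'/2 := by
      rw [hεdef]
      field_simp
    calc |q v| ≤ E v * |m V| + K * ε := hb1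
      _ < ε'/4 + ε'/2 := by linarith
      _ < ε' := by linarith
  refine ⟨A, hA0, ?_⟩
  have hsplit : ∀ v : ℝ, (Real.exp (-Real.pi * v) : ℂ) * p (w v)
      = ((φ v : ℝ) : ℂ) + ((q v : ℝ) : ℂ) * I := by
    intro v
    simp only [Complex.ext_iff, Complex.add_re, Complex.add_im, Complex.mul_re, Complex.mul_im,
      Complex.ofReal_re, Complex.ofReal_im, Complex.I_re, Complex.I_im]
    constructor <;> ring
  have : Tendsto (fun v : ℝ => ((φ v : ℝ) : ℂ) + ((q v : ℝ) : ℂ) * I) atTop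
      (𝓝 ((A : ℂ) + ((0:ℝ) : ℂ) * I)) := by
    apply Tendsto.add
    · exact (Complex.continuous_ofReal.tendsto A).comp hA
    · exact ((Complex.continuous_ofReal.tendsto 0).comp hq).mul_const I
  simp only [Complex.ofReal_zero, zero_mul, add_zero] at this
  exact this.congr (fun v => (hsplit v).symm)


lemma hasDerivAt_conj_conj {f : ℂ → ℂ} {d : ℂ} {x : ℂ}
    (hf : HasDerivAt f d ((starRingEnd ℂ) x)) :
    HasDerivAt (fun z => (starRingEnd ℂ) (f ((starRingEnd ℂ) z))) ((starRingEnd ℂ) d) x := by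
  rw [hasDerivAt_iff_tendsto] at hf ⊢
  have hc : Tendsto (fun z : ℂ => (starRingEnd ℂ) z) (𝓝 x) (𝓝 ((starRingEnd ℂ) x)) :=
    Complex.continuous_conj.tendsto x
  have hcomp := hf.comp hc
  refine hcomp.congr ?_
  intro z
  show ‖(starRingEnd ℂ) z - (starRingEnd ℂ) x‖⁻¹ *
      ‖f ((starRingEnd ℂ) z) - f ((starRingEnd ℂ) x) - ((starRingEnd ℂ) z - (starRingEnd ℂ) x) • d‖
    = ‖z - x‖⁻¹ * ‖(starRingEnd ℂ) (f ((starRingEnd ℂ) z))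
        - (starRingEnd ℂ) (f ((starRingEnd ℂ) x)) - (z - x) • (starRingEnd ℂ) d‖
  congr 1
  · rw [← map_sub, RCLike.norm_conj]
  · have : (starRingEnd ℂ) (f ((starRingEnd ℂ) z)) - (starRingEnd ℂ) (f ((starRingEnd ℂ) x))
        - (z - x) • (starRingEnd ℂ) d
        = (starRingEnd ℂ) (f ((starRingEnd ℂ) z) - f ((starRingEnd ℂ) x)
            - ((starRingEnd ℂ) z - (starRingEnd ℂ) x) • d) := by
      simp only [smul_eq_mul, map_sub, map_mul, Complex.conj_conj]
    rw [this, RCLike.norm_conj]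

lemma conj_diff (p : ℂ → ℂ) (hp : DifferentiableOn ℂ p S) :
    DifferentiableOn ℂ (fun z => (starRingEnd ℂ) (p ((starRingEnd ℂ) z))) S := by
  intro x hx
  have hx' : (starRingEnd ℂ) x ∈ S := by
    simpa [S] using hx
  have h1 : HasDerivAt p (deriv p ((starRingEnd ℂ) x)) ((starRingEnd ℂ) x) :=
    (hp.differentiableAt (isOpen_S.mem_nhds hx')).hasDerivAt
  exact (hasDerivAt_conj_conj h1).differentiableAt.differentiableWithinAt

end StripAux

/-- For a holomorphic `p` with nonnegative real part on the strip `𝕊 = {w : 0 < Re w < 1}`,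
the limits `A = lim_{v→+∞} e^{−πv} p(1/2 + iv)` and `B = lim_{v→−∞} e^{πv} p(1/2 + iv)`
exist, are finite, and are nonnegative real numbers. -/
theorem strip_angular_limits
    (p : ℂ → ℂ)
    (hp : DifferentiableOn ℂ p {w : ℂ | 0 < w.re ∧ w.re < 1})
    (hRe : ∀ w ∈ {w : ℂ | 0 < w.re ∧ w.re < 1}, 0 ≤ (p w).re) :
    ∃ A B : ℝ, 0 ≤ A ∧ 0 ≤ B ∧
      Tendsto (fun v : ℝ =>
          (Real.exp (-Real.pi * v) : ℂ) * p ((1/2 : ℂ) + (v : ℂ) * Complex.I))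
        atTop (nhds (A : ℂ)) ∧
      Tendsto (fun v : ℝ =>
          (Real.exp (Real.pi * v) : ℂ) * p ((1/2 : ℂ) + (v : ℂ) * Complex.I))
        atBot (nhds (B : ℂ)) := by
  have hp' : DifferentiableOn ℂ p StripAux.S := hp
  have hRe' : ∀ w ∈ StripAux.S, 0 ≤ (p w).re := hRe
  obtain ⟨A, hA0, hA⟩ := StripAux.end_limit p hp' hRe'
  set pt : ℂ → ℂ := fun z => (starRingEnd ℂ) (p ((starRingEnd ℂ) z)) with hptdef
  have hpt_diff : DifferentiableOn ℂ pt StripAux.S := StripAux.conj_diff p hp'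
  have hpt_re : ∀ w ∈ StripAux.S, 0 ≤ (pt w).re := by
    intro w hw
    have hw' : (starRingEnd ℂ) w ∈ StripAux.S := by
      simpa [StripAux.S] using hw
    simpa [hptdef] using hRe' _ hw'
  obtain ⟨B, hB0, hB⟩ := StripAux.end_limit pt hpt_diff hpt_re
  refine ⟨A, B, hA0, hB0, hA, ?_⟩
  have h1 := hB.comp (tendsto_neg_atBot_atTop (G := ℝ))
  have h2 := (Complex.continuous_conj.tendsto _).comp h1
  rw [Complex.conj_ofReal] at h2
  refine h2.congr ?_
  intro v
  show (starRingEnd ℂ) ((Real.exp (-Real.pi * -v) : ℂ) * pt ((1/2 : ℂ) + ((-v : ℝ) : ℂ) * I))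
      = (Real.exp (Real.pi * v) : ℂ) * p ((1/2 : ℂ) + (v : ℂ) * Complex.I)
  rw [map_mul, Complex.conj_ofReal]
  congr 1
  · norm_num
  · rw [hptdef]
    simp only [Complex.conj_conj]
    congr 1
    simp [Complex.ext_iff]
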